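/- Generalized Kantorovich constant bounds the secant line: for 0 < m < M and r ∈ (-∞,0)∪(1,∞), for all t ∈ [m,M], L(t) ≤ K(m,M,r)·t^r, where L(t) = ((M-t)m^r + (t-m)M^r)/(M-m) and K(m,M,r) = ((mM^r - Mm^r)/((r-1)(M-m)))·(((r-1)/r)·(M^r - m^r)/(mM^r - Mm^r))^r. -/
import Mathlib

/-- Bernoulli's inequality for real exponents `r < 0` or `r > 1`. -/
lemma bernoulli_rpow_aux {x r : ℝ} (hx : 0 < x) (hr : r < 0 ∨ 1 < r) :
    1 + r * (x - 1) ≤ x ^ r := by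
  rcases hr with hr | hr
  · have hlog : Real.log x ≤ x - 1 := Real.log_le_sub_one_of_pos hx
    have h1 : r * (x - 1) ≤ r * Real.log x := by nlinarith
    have h2 : 1 + Real.log x * r ≤ Real.exp (Real.log x * r) := by
      linarith [Real.add_one_le_exp (Real.log x * r)]
    rw [Real.rpow_def_of_pos hx]
    linarith
  · have hs : (-1 : ℝ) ≤ x - 1 := by linarith
    have := one_add_mul_self_le_rpow_one_add hs hr.le
    simpa using this

/-- The generalized Kantorovich constant bounds the secant line: for `0 < m < M`
and `r < 0` or `r > 1`, for all `t ∈ [m, M]`, `L t ≤ K(m, M, r) * t ^ r` with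
`L t = ((M-t) m^r + (t-m) M^r)/(M-m)` and
`K(m,M,r) = ((m M^r - M m^r)/((r-1)(M-m))) * (((r-1)/r) (M^r - m^r)/(m M^r - M m^r))^r`. -/
theorem kantorovich_constant_bounds_secant (m M r : ℝ) (hm : 0 < m) (hmM : m < M)
    (hr : r < 0 ∨ 1 < r) :
    ∀ t ∈ Set.Icc m M,
      ((M - t) / (M - m)) * m ^ r + ((t - m) / (M - m)) * M ^ r
        ≤ ((m * M ^ r - M * m ^ r) / ((r - 1) * (M - m)))
            * (((r - 1) / r) * (M ^ r - m ^ r) / (m * M ^ r - M * m ^ r)) ^ r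
          * t ^ r := by
  intro t ht
  obtain ⟨htm, htM⟩ := ht
  have hM : 0 < M := hm.trans hmM
  have htpos : 0 < t := hm.trans_le htm
  have hMm : (0:ℝ) < M - m := sub_pos.2 hmM
  have hmr : 0 < m ^ r := Real.rpow_pos_of_pos hm r
  have hMr : 0 < M ^ r := Real.rpow_pos_of_pos hM r
  set c := m * M ^ r - M * m ^ r with hc_def
  set d := M ^ r - m ^ r with hd_def
  have hq1 : 1 < M / m := (one_lt_div hm).2 hmM
  have hdivr : (M / m) ^ r = M ^ r / m ^ r := Real.div_rpow hM.le hm.le r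
  obtain ⟨hC, ht0p, hrne, hr1ne, hcne, hdne⟩ :
      0 < c / ((r - 1) * (M - m)) ∧ 0 < r * c / ((r - 1) * d) ∧
        r ≠ 0 ∧ r - 1 ≠ 0 ∧ c ≠ 0 ∧ d ≠ 0 := by
    rcases hr with hr | hr
    · -- r < 0 : c < 0, d < 0
      have h1 : (M / m) ^ r < (M / m) ^ (1:ℝ) :=
        Real.rpow_lt_rpow_of_exponent_lt hq1 (by linarith)
      have h0 : (M / m) ^ r < (M / m) ^ (0:ℝ) :=
        Real.rpow_lt_rpow_of_exponent_lt hq1 hr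
      rw [hdivr, Real.rpow_one] at h1
      rw [hdivr, Real.rpow_zero] at h0
      have hd : d < 0 := by
        have := (div_lt_one (by positivity)).1 h0
        simp only [hd_def]; linarith
      have hc : c < 0 := by
        have := (div_lt_div_iff₀ (by positivity) hm).1 h1
        simp only [hc_def]; nlinarith
      refine ⟨div_pos_of_neg_of_neg hc (mul_neg_of_neg_of_pos (by linarith) hMm),
        div_pos (mul_pos_of_neg_of_neg hr hc) (mul_pos_of_neg_of_neg (by linarith) hd),
        ne_of_lt hr, by intro h; linarith [h], ne_of_lt hc, ne_of_lt hd⟩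
    · -- 1 < r : c > 0, d > 0
      have h1 : (M / m) ^ (1:ℝ) < (M / m) ^ r :=
        Real.rpow_lt_rpow_of_exponent_lt hq1 hr
      rw [hdivr, Real.rpow_one] at h1
      have hd : 0 < d := by
        have := Real.rpow_lt_rpow hm.le hmM (by linarith : (0:ℝ) < r)
        simp only [hd_def]; linarith
      have hc : 0 < c := by
        have := (div_lt_div_iff₀ hm (by positivity)).1 h1
        simp only [hc_def]; nlinarith
      refine ⟨div_pos hc (mul_pos (by linarith) hMm),
        div_pos (mul_pos (by linarith) hc) (mul_pos (by linarith) hd),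
        by positivity, by intro h; linarith [h], ne_of_gt hc, ne_of_gt hd⟩
  set t0 := r * c / ((r - 1) * d) with ht0_def
  have hA : ((M - t) / (M - m)) * m ^ r + ((t - m) / (M - m)) * M ^ r
      = c / ((r - 1) * (M - m)) * (1 + r * (t / t0 - 1)) := by
    rw [ht0_def]
    field_simp
    ring
  have hinv : ((r - 1) / r) * d / c = 1 / t0 := by
    rw [ht0_def]
    field_simp
  have hB : (c / ((r - 1) * (M - m))) * (((r - 1) / r) * d / c) ^ r * t ^ r
      = (c / ((r - 1) * (M - m))) * (t / t0) ^ r := by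
    rw [hinv, mul_assoc]
    congr 1
    rw [← Real.mul_rpow (by positivity) htpos.le]
    congr 1
    field_simp
  calc ((M - t) / (M - m)) * m ^ r + ((t - m) / (M - m)) * M ^ r
      = c / ((r - 1) * (M - m)) * (1 + r * (t / t0 - 1)) := hA
    _ ≤ c / ((r - 1) * (M - m)) * (t / t0) ^ r := by
        have hb := bernoulli_rpow_aux (div_pos htpos ht0p) hr
        exact mul_le_mul_of_nonneg_left hb hC.le
    _ = _ := hB.symm
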